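/- Let A → A' be a faithfully flat ring homomorphism of noetherian rings, U ⊆ Spec A an open subset with preimage U' ⊆ Spec A'. Then Γ(U', O_{Spec A'}) ≅ Γ(U, O_{Spec A}) ⊗_A A'. -/

import Mathlib

open AlgebraicGeometry PrimeSpectrum TopologicalSpace TensorProduct Opposite Function
open AlgebraicGeometry.StructureSheaf

set_option maxHeartbeats 2000000
set_option synthInstance.maxHeartbeats 1000000

namespace Stmt2Aux

section General

variable (R : Type) [CommRing R]

abbrev Γo (U : Opens (PrimeSpectrum R)) : Type :=
  (Spec.structureSheaf R).obj.obj (op U)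

noncomputable instance instAlgΓo (U : Opens (PrimeSpectrum R)) : Algebra R (Γo R U) :=
  (StructureSheaf.toOpen R U).hom.toAlgebra

/-- Restriction as an `R`-algebra hom. -/
noncomputable def res {U V : Opens (PrimeSpectrum R)} (h : V ≤ U) : Γo R U →ₐ[R] Γo R V where
  toRingHom := ((Spec.structureSheaf R).obj.map (CategoryTheory.homOfLE h).op).hom
  commutes' r := rfl

theorem res_res {U V W : Opens (PrimeSpectrum R)} (h1 : V ≤ U) (h2 : W ≤ V)
    (s : Γo R U) : res R h2 (res R h1 s) = res R (h2.trans h1) s := rfl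

variable {R}

theorem MV_inj (X Y : Opens (PrimeSpectrum R)) {s t : Γo R (X ⊔ Y)}
    (h1 : res R le_sup_left s = res R le_sup_left t)
    (h2 : res R le_sup_right s = res R le_sup_right t) : s = t :=
  TopCat.Sheaf.eq_of_locally_eq₂ (Spec.structureSheaf R)
    (CategoryTheory.homOfLE (le_sup_left : X ≤ X ⊔ Y))
    (CategoryTheory.homOfLE (le_sup_right : Y ≤ X ⊔ Y)) le_rfl s t h1 h2

theorem MV_glue (X Y : Opens (PrimeSpectrum R)) (a : Γo R X) (b : Γo R Y)
    (hab : res R (inf_le_left : X ⊓ Y ≤ X) a = res R inf_le_right b) :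
    ∃ s : Γo R (X ⊔ Y), res R le_sup_left s = a ∧ res R le_sup_right s = b := by
  classical
  set U : Bool → Opens (PrimeSpectrum R) := fun i => bif i then X else Y with hU
  have hXU : X = U true := rfl
  have hYU : Y = U false := rfl
  have hcov : X ⊔ Y ≤ iSup U := sup_le (le_iSup U true) (le_iSup U false)
  have hcomp : TopCat.Presheaf.IsCompatible (Spec.structureSheaf R).val U
      (fun i => match i with | true => a | false => b) := by
    intro i j
    cases i <;> cases j
    · rfl
    · -- U false ⊓ U true = Y ⊓ X
      show res R (inf_le_left : Y ⊓ X ≤ Y) b = res R (inf_le_right : Y ⊓ X ≤ X) a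
      have := congrArg (res R (le_inf (inf_le_right : Y ⊓ X ≤ X) inf_le_left)) hab
      rw [res_res, res_res] at this
      exact this.symm
    · exact hab
    · rfl
  obtain ⟨s, hs, -⟩ := TopCat.Sheaf.existsUnique_gluing' (Spec.structureSheaf R) U (X ⊔ Y)
    (fun i => CategoryTheory.homOfLE (by cases i <;> [exact le_sup_right; exact le_sup_left]))
    hcov (fun i => match i with | true => a | false => b) hcomp
  exact ⟨s, hs true, hs false⟩

theorem Γo_subsingleton {U : Opens (PrimeSpectrum R)} (h : ∀ p, p ∉ U) :
    Subsingleton (Γo R U) :=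
  ⟨fun a b => Subtype.eq (funext fun p => absurd p.2 (h p.1))⟩

end General

section Two

variable (A A' : Type) [CommRing A] [CommRing A'] [Algebra A A']

abbrev Uc (U : Opens (PrimeSpectrum A)) : Opens (PrimeSpectrum A') :=
  (Opens.comap ⟨PrimeSpectrum.comap (algebraMap A A'), PrimeSpectrum.continuous_comap (algebraMap A A')⟩) U

noncomputable scoped instance instAlgA (V : Opens (PrimeSpectrum A')) :
    Algebra A (Γo A' V) :=
  ((algebraMap A' (Γo A' V)).comp (algebraMap A A')).toAlgebra

scoped instance instTowerA (V : Opens (PrimeSpectrum A')) :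
    IsScalarTower A A' (Γo A' V) :=
  IsScalarTower.of_algebraMap_eq' rfl

/-- The comap on sections, as an `A`-algebra hom. -/
noncomputable def cmap (U : Opens (PrimeSpectrum A)) : Γo A U →ₐ[A] Γo A' (Uc A A' U) where
  toRingHom := StructureSheaf.comap (algebraMap A A') U (Uc A A' U) fun _ hp => hp
  commutes' a := congrArg (fun f => f a)
    (congrArg CommRingCat.Hom.hom (toOpen_comp_comap (algebraMap A A') U))

theorem cmap_res {U V : Opens (PrimeSpectrum A)} (h : V ≤ U) (s : Γo A U) :
    res A' (Opens.comap_mono _ h) (cmap A A' U s) = cmap A A' V (res A h s) := rfl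

/-- The base-change comparison map. -/
noncomputable def φ (U : Opens (PrimeSpectrum A)) :
    A' ⊗[A] Γo A U →ₐ[A] Γo A' (Uc A A' U) :=
  Algebra.TensorProduct.productMap
    (IsScalarTower.toAlgHom A A' (Γo A' (Uc A A' U))) (cmap A A' U)

theorem φ_tmul (U : Opens (PrimeSpectrum A)) (a' : A') (s : Γo A U) :
    φ A A' U (a' ⊗ₜ s) = algebraMap A' _ a' * cmap A A' U s :=
  Algebra.TensorProduct.productMap_apply_tmul _ _ _ _

theorem bij_basicOpen (g : A) : Function.Bijective (φ A A' (basicOpen g)) := by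
  set Bg := Γo A (basicOpen g) with hBg
  set Bg' := Γo A' (Uc A A' (basicOpen g)) with hBg'
  haveI hloc' : IsLocalization.Away (algebraMap A A' g) Bg' := by
    have h := StructureSheaf.IsLocalization.to_basicOpen A' (algebraMap A A' g)
    exact ⟨h.1⟩
  letI : Algebra Bg Bg' := (cmap A A' (basicOpen g)).toRingHom.toAlgebra
  haveI : IsScalarTower A Bg Bg' :=
    IsScalarTower.of_algebraMap_eq' (RingHom.ext fun a =>
      ((cmap A A' (basicOpen g)).commutes a).symm)
  haveI : IsLocalization (Algebra.algebraMapSubmonoid A' (Submonoid.powers g)) Bg' := by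
    rw [Algebra.algebraMapSubmonoid, Submonoid.map_powers]
    exact hloc'
  haveI : IsLocalization (Submonoid.powers g) Bg := by
    have h := StructureSheaf.IsLocalization.to_basicOpen A g
    exact ⟨h.1⟩
  haveI hpush : Algebra.IsPushout A A' Bg Bg' :=
    Algebra.isPushout_of_isLocalization (Submonoid.powers g) Bg A' Bg'
  have h : ∀ x, φ A A' (basicOpen g) x = hpush.out.equiv x := by
    intro x
    induction x with
    | zero => rw [map_zero, map_zero]
    | add x y hx hy => rw [map_add, map_add, hx, hy]
    | tmul a' s =>
      rw [φ_tmul, IsBaseChange.equiv_tmul, Algebra.smul_def]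
      rfl
  rw [show ⇑(φ A A' (basicOpen g)) = ⇑hpush.out.equiv from funext h]
  exact hpush.out.equiv.bijective

theorem tensor_subsingleton {M : Type} [AddCommGroup M] [Module A M]
    [Subsingleton M] : Subsingleton (A' ⊗[A] M) := by
  constructor
  have hz : ∀ z : A' ⊗[A] M, z = 0 := by
    intro z
    induction z with
    | zero => rfl
    | add x y hx hy => rw [hx, hy, add_zero]
    | tmul a m => rw [Subsingleton.elim m 0, tmul_zero]
  intro x y
  rw [hz x, hz y]

theorem bij_bot : Function.Bijective (φ A A' ⊥) := by
  haveI h1 : Subsingleton (Γo A (⊥ : Opens (PrimeSpectrum A))) :=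
    Γo_subsingleton fun p hp => (by simpa using hp)
  haveI h2 : Subsingleton (Γo A' (Uc A A' ⊥)) :=
    Γo_subsingleton fun p hp => (by simpa using hp)
  haveI h3 : Subsingleton (A' ⊗[A] Γo A (⊥ : Opens (PrimeSpectrum A))) :=
    tensor_subsingleton A A'
  exact ⟨fun x y _ => Subsingleton.elim x y, fun y => ⟨0, Subsingleton.elim _ _⟩⟩

section Flat

variable [Module.Flat A A']

theorem bij_sup (V W : Opens (PrimeSpectrum A))
    (hV : Bijective (φ A A' V)) (hW : Bijective (φ A A' W))
    (hVW : Bijective (φ A A' (V ⊓ W))) : Bijective (φ A A' (V ⊔ W)) := by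
  classical
  -- the Mayer-Vietoris sequence over A
  let rV : Γo A (V ⊔ W) →ₗ[A] Γo A V := (res A le_sup_left).toLinearMap
  let rW : Γo A (V ⊔ W) →ₗ[A] Γo A W := (res A le_sup_right).toLinearMap
  let r : Γo A (V ⊔ W) →ₗ[A] Γo A V × Γo A W := rV.prod rW
  let dm : Γo A V × Γo A W →ₗ[A] Γo A (V ⊓ W) :=
    (res A inf_le_left).toLinearMap ∘ₗ LinearMap.fst A _ _
      - (res A inf_le_right).toLinearMap ∘ₗ LinearMap.snd A _ _
  have hri : Injective r := fun s t h =>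
    MV_inj V W (congrArg Prod.fst h) (congrArg Prod.snd h)
  have hre : Function.Exact r dm := by
    intro ab
    have hdm : dm ab = res A inf_le_left ab.1 - res A inf_le_right ab.2 := rfl
    constructor
    · intro h0
      obtain ⟨s, hs1, hs2⟩ := MV_glue V W ab.1 ab.2 (sub_eq_zero.mp (hdm ▸ h0))
      exact ⟨s, Prod.ext hs1 hs2⟩
    · rintro ⟨s, rfl⟩
      show res A inf_le_left (res A le_sup_left s)
        - res A inf_le_right (res A le_sup_right s) = 0
      rw [res_res, res_res]
      exact sub_self _
  -- the tensored sequence is exact since A' is flat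
  have hti : Injective (LinearMap.lTensor A' r) :=
    Module.Flat.lTensor_preserves_injective_linearMap r hri
  have hte : Function.Exact (LinearMap.lTensor A' r) (LinearMap.lTensor A' dm) :=
    Module.Flat.lTensor_exact A' hre
  -- the middle vertical map
  let pr1 : A' ⊗[A] (Γo A V × Γo A W) →ₗ[A] A' ⊗[A] Γo A V :=
    LinearMap.lTensor A' (LinearMap.fst A _ _)
  let pr2 : A' ⊗[A] (Γo A V × Γo A W) →ₗ[A] A' ⊗[A] Γo A W :=
    LinearMap.lTensor A' (LinearMap.snd A _ _)
  let ψ : A' ⊗[A] (Γo A V × Γo A W) → Γo A' (Uc A A' V) × Γo A' (Uc A A' W) :=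
    fun y => (φ A A' V (pr1 y), φ A A' W (pr2 y))
  have hpe : ∀ z, ((pr1 z, pr2 z) : A' ⊗[A] Γo A V × A' ⊗[A] Γo A W) =
      TensorProduct.prodRight A A A' (Γo A V) (Γo A W) z := by
    intro z
    induction z with
    | zero => rw [map_zero, map_zero, map_zero]; rfl
    | add a b ha hb =>
      rw [map_add, map_add, map_add, ← ha, ← hb]; rfl
    | tmul a st =>
      obtain ⟨s, t⟩ := st
      simp only [pr1, pr2, LinearMap.lTensor_tmul, TensorProduct.prodRight_tmul]
      rfl
  have hψ : Bijective ψ := by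
    have heq : ψ = (Prod.map (φ A A' V) (φ A A' W)) ∘
        (TensorProduct.prodRight A A A' (Γo A V) (Γo A W)) := by
      funext y
      show (φ A A' V (pr1 y), φ A A' W (pr2 y)) = _
      rw [Function.comp_apply, ← hpe y]
      rfl
    rw [heq]
    exact (hV.prodMap hW).comp (TensorProduct.prodRight A A A' _ _).bijective
  -- commutation of the squares
  have ecomp1 : ∀ z, pr1 (LinearMap.lTensor A' r z) = LinearMap.lTensor A' rV z := by
    intro z
    rw [← LinearMap.lTensor_comp_apply]
    rfl
  have ecomp2 : ∀ z, pr2 (LinearMap.lTensor A' r z) = LinearMap.lTensor A' rW z := by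
    intro z
    rw [← LinearMap.lTensor_comp_apply]
    rfl
  have sq1V : ∀ x, res A' (le_sup_left : Uc A A' V ≤ Uc A A' V ⊔ Uc A A' W)
      (φ A A' (V ⊔ W) x) = φ A A' V (LinearMap.lTensor A' rV x) := by
    intro x
    induction x with
    | zero => erw [map_zero]
    | add a b ha hb => erw [map_add, map_add, map_add, map_add, ha, hb]
    | tmul a' s =>
      erw [LinearMap.lTensor_tmul, φ_tmul, φ_tmul, map_mul]
      congr 1
  have sq1W : ∀ x, res A' (le_sup_right : Uc A A' W ≤ Uc A A' V ⊔ Uc A A' W)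
      (φ A A' (V ⊔ W) x) = φ A A' W (LinearMap.lTensor A' rW x) := by
    intro x
    induction x with
    | zero => erw [map_zero]
    | add a b ha hb => erw [map_add, map_add, map_add, map_add, ha, hb]
    | tmul a' s =>
      erw [LinearMap.lTensor_tmul, φ_tmul, φ_tmul, map_mul]
      congr 1
  have sq2 : ∀ y, φ A A' (V ⊓ W) (LinearMap.lTensor A' dm y)
      = res A' (inf_le_left : Uc A A' V ⊓ Uc A A' W ≤ Uc A A' V) (φ A A' V (pr1 y))
        - res A' inf_le_right (φ A A' W (pr2 y)) := by
    intro y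
    induction y with
    | zero =>
      simp only [map_zero, sub_zero]
      exact (sub_self _).symm
    | add a b ha hb =>
      simp only [map_add]
      rw [ha, hb]
      abel
    | tmul a' st =>
      obtain ⟨s, t⟩ := st
      have hdm : dm (s, t) = res A inf_le_left s - res A inf_le_right t := rfl
      rw [LinearMap.lTensor_tmul, hdm, TensorProduct.tmul_sub, map_sub,
        φ_tmul, φ_tmul]
      show algebraMap A' _ a' * cmap A A' (V ⊓ W) (res A inf_le_left s)
          - algebraMap A' _ a' * cmap A A' (V ⊓ W) (res A inf_le_right t) = _
      rw [← cmap_res A A' inf_le_left s, ← cmap_res A A' inf_le_right t]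
      show _ = res A' _ (φ A A' V (a' ⊗ₜ s)) - res A' _ (φ A A' W (a' ⊗ₜ t))
      rw [φ_tmul, φ_tmul, map_mul, map_mul, (res A' _).commutes a',
        (res A' _).commutes a']
      rfl
  constructor
  · intro x y h
    apply hti
    apply hψ.injective
    show (φ A A' V (pr1 _), φ A A' W (pr2 _)) = (φ A A' V (pr1 _), φ A A' W (pr2 _))
    rw [ecomp1, ecomp1, ecomp2, ecomp2, ← sq1V, ← sq1W, ← sq1V, ← sq1W, h]
  · intro m'
    obtain ⟨x, hx⟩ := hψ.surjective
      (res A' (le_sup_left : Uc A A' V ≤ Uc A A' V ⊔ Uc A A' W) m',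
       res A' (le_sup_right : Uc A A' W ≤ Uc A A' V ⊔ Uc A A' W) m')
    have hx1 : φ A A' V (pr1 x)
        = res A' (le_sup_left : Uc A A' V ≤ Uc A A' V ⊔ Uc A A' W) m' :=
      congrArg Prod.fst hx
    have hx2 : φ A A' W (pr2 x)
        = res A' (le_sup_right : Uc A A' W ≤ Uc A A' V ⊔ Uc A A' W) m' :=
      congrArg Prod.snd hx
    have hdx : LinearMap.lTensor A' dm x = 0 := by
      apply hVW.injective
      erw [map_zero, sq2, hx1, hx2]
      exact sub_self _
    obtain ⟨u, hu⟩ := (hte x).mp hdx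
    refine ⟨u, MV_inj (Uc A A' V) (Uc A A' W) ?_ ?_⟩
    · rw [sq1V, ← ecomp1, hu, hx1]
    · rw [sq1W, ← ecomp2, hu, hx2]

theorem inf_sup_basicOpen [DecidableEq A] (g : A) (s : Finset A) :
    basicOpen g ⊓ s.sup (fun x => basicOpen x)
      = (s.image fun x => g * x).sup (fun x => basicOpen x) := by
  classical
  induction s using Finset.induction_on with
  | empty => simp
  | @insert a t ha ih =>
    rw [Finset.sup_insert, Finset.image_insert, Finset.sup_insert, inf_sup_left, ih,
      ← basicOpen_mul]

theorem bij_finsetSup : ∀ (n : ℕ) (t : Finset A), t.card ≤ n →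
    Bijective (φ A A' (t.sup fun g => basicOpen g)) := by
  classical
  intro n
  induction n with
  | zero =>
    intro t ht
    rw [Nat.le_zero, Finset.card_eq_zero] at ht
    subst ht
    rw [Finset.sup_empty]
    exact bij_bot A A'
  | succ n ih =>
    intro t ht
    rcases t.eq_empty_or_nonempty with rfl | ⟨g, hg⟩
    · rw [Finset.sup_empty]
      exact bij_bot A A'
    · have hins : t = insert g (t.erase g) := (Finset.insert_erase hg).symm
      have hcard : (t.erase g).card ≤ n := by
        have h1 := Finset.card_erase_of_mem hg
        have h2 : 1 ≤ t.card := Finset.card_pos.mpr ⟨g, hg⟩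
        omega
      rw [hins, Finset.sup_insert]
      refine bij_sup A A' _ _ (bij_basicOpen A A' g) (ih _ hcard) ?_
      rw [inf_sup_basicOpen]
      exact ih _ (le_trans Finset.card_image_le hcard)

end Flat

theorem exists_finset [IsNoetherianRing A] (U : Opens (PrimeSpectrum A)) :
    ∃ t : Finset A, U = t.sup fun g => basicOpen g := by
  obtain ⟨t, ht⟩ := (isCompact_isOpen_iff).mp
    ⟨TopologicalSpace.NoetherianSpace.isCompact (U : Set (PrimeSpectrum A)), U.2⟩
  refine ⟨t, Opens.ext ?_⟩
  rw [← ht, Finset.sup_eq_iSup]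
  ext p
  simp only [Set.mem_compl_iff, mem_zeroLocus, Set.subset_def, not_forall,
    Opens.coe_iSup, Set.mem_iUnion, SetLike.mem_coe, mem_basicOpen]

end Two

end Stmt2Aux

open Stmt2Aux in
/-- Let `A → A'` be a faithfully flat homomorphism of noetherian rings,
`U ⊆ Spec A` an open subset and `U' ⊆ Spec A'` its preimage. Then
`Γ(U', O_{Spec A'}) ≅ Γ(U, O_{Spec A}) ⊗_A A'` (as `A'`-algebras). -/
theorem stmt2 {A A' : Type} [CommRing A] [CommRing A']
    [IsNoetherianRing A] [IsNoetherianRing A']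
    [Algebra A A'] [Module.FaithfullyFlat A A']
    (U : Opens (PrimeSpectrum A)) :
    letI U' : Opens (PrimeSpectrum A') :=
      (Opens.comap ⟨PrimeSpectrum.comap (algebraMap A A'), PrimeSpectrum.continuous_comap (algebraMap A A')⟩) U
    letI B := (Spec.structureSheaf A).val.obj (Opposite.op U)
    letI B' := (Spec.structureSheaf A').val.obj (Opposite.op U')
    letI : Algebra A B := (StructureSheaf.toOpen A U).hom.toAlgebra
    letI : Algebra A' B' := (StructureSheaf.toOpen A' U').hom.toAlgebra
    Nonempty (B' ≃ₐ[A'] A' ⊗[A] B) := by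
  have hb : Bijective (φ A A' U) := by
    obtain ⟨t, ht⟩ := exists_finset A U
    rw [ht]
    exact bij_finsetSup A A' t.card t le_rfl
  let φ' : A' ⊗[A] Γo A U →ₐ[A'] Γo A' (Uc A A' U) :=
    { toRingHom := (φ A A' U).toRingHom
      commutes' := fun a' => by
        show φ A A' U (algebraMap A' (A' ⊗[A] Γo A U) a') = _
        rw [Algebra.TensorProduct.algebraMap_apply, Algebra.algebraMap_self_apply, φ_tmul,
          map_one, mul_one] }
  exact ⟨(AlgEquiv.ofBijective φ' hb).symm⟩
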